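/- arXiv:2211.16396 — 2 statements merged into one kernel-verified Lean document; each statement's English description precedes it below -/
import Mathlib

section
/- Let V be a finite dimensional real vector space endowed with a complex structure J (a linear map with J² = -I) and a nonzero alternating 2-form ω such that ω(JX,Y) = ω(X,JY) for all X,Y ∈ V. Then there exists a basis {u_1,…,u_q, Ju_1,…,Ju_q, e_1,…,e_p, f_1,…,f_p, Je_1,…,Je_p, Jf_1,…,Jf_p} of V such that ω(u_h,·) = ω(Ju_h,·) = 0 for all h, ω(e_k,f_l) = δ_{kl}, ω(Je_k,Jf_l) = -δ_{kl}, and all remaining pairings among the basis vectors vanish (in particular ω(e_k,Jf_l) = ω(Je_k,f_l) = ω(e_k,Je_l) = ω(f_k,Jf_l) = ω(e_k,e_l) = ω(f_k,f_l) = 0). In particular dim V = 2q + 4p, with q = 0 when ω is nondegenerate. -/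
open Module Submodule in
theorem symp_aux (K : Type) [Field K] (n : ℕ) :
    ∀ (V : Type) [AddCommGroup V] [Module K V] [FiniteDimensional K V],
      Module.finrank K V = n →
      ∀ (Ω : V →ₗ[K] V →ₗ[K] K), (∀ v, Ω v v = 0) →
      ∃ (q p : ℕ) (u : Fin q → V) (e f : Fin p → V),
        Submodule.span K (Set.range (Sum.elim u (Sum.elim e f))) = ⊤ ∧
        q + 2 * p = n ∧
        (∀ h v, Ω (u h) v = 0) ∧
        (∀ k l, Ω (e k) (f l) = if k = l then 1 else 0) ∧
        (∀ k l, Ω (e k) (e l) = 0) ∧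
        (∀ k l, Ω (f k) (f l) = 0) := by
  induction n using Nat.strong_induction_on with
  | _ n IH =>
  intro V _ _ _ hdim Ω hΩ
  have halt : LinearMap.IsAlt Ω := hΩ
  have hrefl : LinearMap.IsRefl Ω := halt.isRefl
  by_cases hzero : Ω = 0
  · subst hzero
    refine ⟨n, 0, fun i => (Module.finBasis K V) (Fin.cast hdim.symm i),
      Fin.elim0, Fin.elim0, ?_, by ring, by simp, by simp, by simp, by simp⟩
    rw [eq_top_iff, ← (Module.finBasis K V).span_eq]
    apply Submodule.span_le.mpr
    rintro _ ⟨i, rfl⟩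
    exact Submodule.subset_span ⟨Sum.inl (Fin.cast hdim i), rfl⟩
  · -- pick e, f with Ω e f = 1
    obtain ⟨x, y, hxy⟩ : ∃ x y, Ω x y ≠ 0 := by
      by_contra hcon
      push_neg at hcon
      exact hzero (by ext x y; simp [hcon])
    set eV := x with heVdef
    set fV := (Ω x y)⁻¹ • y with hfVdef
    have hef : Ω eV fV = 1 := by
      simp [hfVdef, inv_mul_cancel₀ hxy]
      exact inv_mul_cancel₀ hxy
    have hfe : Ω fV eV = -1 := by
      rw [← halt.neg, hef]
    set W : Submodule K V := Submodule.span K {eV, fV} with hWdef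
    have heW : eV ∈ W := Submodule.subset_span (by simp)
    have hfW : fV ∈ W := Submodule.subset_span (by simp)
    have hnd : (LinearMap.BilinForm.restrict Ω W).Nondegenerate := by
      refine (LinearMap.IsRefl.nondegenerate_iff_separatingLeft (B := LinearMap.BilinForm.restrict Ω W) (fun x y h => hrefl _ _ h)).mpr ?_
      rintro ⟨w, hw⟩ hw0
      obtain ⟨a, b, rfl⟩ := Submodule.mem_span_pair.mp hw
      have h1 := hw0 ⟨eV, heW⟩
      have h2 := hw0 ⟨fV, hfW⟩
      simp only [LinearMap.BilinForm.restrict_apply, LinearMap.domRestrict_apply, map_add,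
        map_smul, LinearMap.add_apply, LinearMap.smul_apply, smul_eq_mul, hef, hfe, hΩ,
        mul_one, mul_neg_one, mul_zero, add_zero, zero_add, neg_eq_zero] at h1 h2
      simp [h1, h2]
    have hcompl : IsCompl W (LinearMap.BilinForm.orthogonal Ω W) :=
      LinearMap.BilinForm.isCompl_orthogonal_of_restrict_nondegenerate hrefl hnd
    set W' := LinearMap.BilinForm.orthogonal Ω W with hW'def
    have hWfin : finrank K W = 2 := by
      have hli : LinearIndependent K ![eV, fV] := by
        rw [LinearIndependent.pair_iff]
        intro s t hst
        have h1 : Ω (s • eV + t • fV) fV = s := by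
          simp [map_add, map_smul, hef, hΩ fV]
        have h2 : Ω (s • eV + t • fV) eV = -t := by
          simp [map_add, map_smul, hfe, hΩ eV]
        rw [hst, map_zero, LinearMap.zero_apply] at h1 h2
        exact ⟨h1.symm, neg_eq_zero.mp h2.symm⟩
      have hr : ({eV, fV} : Set V) = Set.range ![eV, fV] := by
        ext z
        simp [Fin.exists_fin_two, or_comm]
      rw [hWdef, hr, finrank_span_eq_card hli]
      simp
    have hsum : finrank K W + finrank K W' = n := by
      rw [← hdim]; exact Submodule.finrank_add_eq_of_isCompl hcompl
    set m := finrank K W' with hmdef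
    have hmn : m < n := by omega
    have horth : ∀ x ∈ W, ∀ z : W', Ω x (z : V) = 0 := fun x hx z => z.2 x hx
    obtain ⟨q, p, u', e', f', hspan', hcount', hrad', hef', hee', hff'⟩ :=
      IH m hmn W' rfl (LinearMap.BilinForm.restrict Ω W') (fun v => hΩ v)
    refine ⟨q, p + 1, fun i => (u' i : V),
      Fin.cons eV (fun i => (e' i : V)), Fin.cons fV (fun i => (f' i : V)),
      ?_, by omega, ?_, ?_, ?_, ?_⟩
    · -- span
      rw [eq_top_iff]
      intro v _
      have hv : v ∈ W ⊔ W' := by rw [hcompl.sup_eq_top]; trivial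
      obtain ⟨w, hw, w', hw', rfl⟩ := Submodule.mem_sup.mp hv
      apply Submodule.add_mem
      · -- w in span
        refine Submodule.span_le.mpr ?_ hw
        rintro z (rfl | rfl)
        · exact Submodule.subset_span ⟨Sum.inr (Sum.inl 0), rfl⟩
        · exact Submodule.subset_span ⟨Sum.inr (Sum.inr 0), rfl⟩
      · have hmem : w' ∈ Submodule.map W'.subtype
            (Submodule.span K (Set.range (Sum.elim u' (Sum.elim e' f')))) := by
          exact ⟨⟨w', hw'⟩, by rw [hspan']; trivial, rfl⟩
        rw [Submodule.map_span] at hmem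
        refine Submodule.span_le.mpr ?_ hmem
        rintro _ ⟨_, ⟨i, rfl⟩, rfl⟩
        rcases i with i | i | i
        · exact Submodule.subset_span ⟨Sum.inl i, rfl⟩
        · exact Submodule.subset_span ⟨Sum.inr (Sum.inl i.succ), by simp⟩
        · exact Submodule.subset_span ⟨Sum.inr (Sum.inr i.succ), by simp⟩
    · -- radical
      intro h v
      have hv : v ∈ W ⊔ W' := by rw [hcompl.sup_eq_top]; trivial
      obtain ⟨w, hw, w', hw', rfl⟩ := Submodule.mem_sup.mp hv
      rw [map_add]
      have h1 : Ω ((u' h : V)) w = 0 := hrefl _ _ (horth w hw (u' h))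
      have h2 : Ω ((u' h : V)) w' = 0 := hrad' h ⟨w', hw'⟩
      rw [h1, h2, add_zero]
    · -- e f pairings
      intro k l
      refine Fin.cases ?_ ?_ k <;> [skip; intro i] <;>
        (refine Fin.cases ?_ ?_ l <;> [skip; intro j])
      · simp [hef]
      · simpa [Fin.succ_ne_zero j, (Fin.succ_ne_zero j).symm] using horth eV heW (f' j)
      · simpa [Fin.succ_ne_zero i] using hrefl _ _ (horth fV hfW (e' i))
      · have := hef' i j
        simpa [Fin.succ_inj] using this
    · intro k l
      refine Fin.cases ?_ ?_ k <;> [skip; intro i] <;>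
        (refine Fin.cases ?_ ?_ l <;> [skip; intro j])
      · simp [hΩ]
      · simpa using horth eV heW (e' j)
      · simpa using hrefl _ _ (horth eV heW (e' i))
      · simpa using hee' i j
    · intro k l
      refine Fin.cases ?_ ?_ k <;> [skip; intro i] <;>
        (refine Fin.cases ?_ ?_ l <;> [skip; intro j])
      · simp [hΩ]
      · simpa using horth fV hfW (f' j)
      · simpa using hrefl _ _ (horth fV hfW (f' i))
      · simpa using hff' i j

/-- Lemma on 2-forms compatible with a complex structure.
Let `V` be a finite dimensional real vector space with a complex structure `J`
(`J² = -I`) and a nonzero alternating 2-form `ω` such that `ω(JX,Y) = ω(X,JY)`.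
Then there is a basis `{u_h, Ju_h, e_k, f_k, Je_k, Jf_k}` of `V` in which `ω` has the
normal form described in the paper; in particular `dim V = 2q + 4p`, with `q = 0`
when `ω` is nondegenerate. -/
theorem statement1
    (V : Type) [AddCommGroup V] [Module ℝ V] [FiniteDimensional ℝ V]
    (J : V →ₗ[ℝ] V) (hJ : ∀ v, J (J v) = -v)
    (ω : V →ₗ[ℝ] V →ₗ[ℝ] ℝ) (hωalt : ∀ v, ω v v = 0) (hωne : ω ≠ 0)
    (hcompat : ∀ X Y, ω (J X) Y = ω X (J Y)) :
    ∃ (q p : ℕ) (u : Fin q → V) (e f : Fin p → V),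
      -- the family {u_h, Ju_h, e_k, f_k, Je_k, Jf_k} is a basis of V
      (LinearIndependent ℝ
          (Sum.elim u (Sum.elim (J ∘ u) (Sum.elim e (Sum.elim f (Sum.elim (J ∘ e) (J ∘ f)))))) ∧
        Submodule.span ℝ
          (Set.range
            (Sum.elim u (Sum.elim (J ∘ u) (Sum.elim e (Sum.elim f (Sum.elim (J ∘ e) (J ∘ f))))))) = ⊤) ∧
      -- the u_h, Ju_h are in the radical of ω
      (∀ h, ∀ v, ω (u h) v = 0 ∧ ω (J (u h)) v = 0) ∧
      -- ω(e_k, f_l) = δ_{kl},  ω(Je_k, Jf_l) = -δ_{kl}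
      (∀ k l, ω (e k) (f l) = if k = l then 1 else 0) ∧
      (∀ k l, ω (J (e k)) (J (f l)) = if k = l then -1 else 0) ∧
      -- all the remaining pairings among the basis vectors vanish
      (∀ k l, ω (e k) (e l) = 0) ∧
      (∀ k l, ω (f k) (f l) = 0) ∧
      (∀ k l, ω (e k) (J (f l)) = 0) ∧
      (∀ k l, ω (J (e k)) (f l) = 0) ∧
      (∀ k l, ω (e k) (J (e l)) = 0) ∧
      (∀ k l, ω (f k) (J (f l)) = 0) ∧
      (∀ k l, ω (J (e k)) (J (e l)) = 0) ∧
      (∀ k l, ω (J (f k)) (J (f l)) = 0) ∧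
      -- dimension count
      Module.finrank ℝ V = 2 * q + 4 * p ∧
      -- q = 0 when ω is nondegenerate
      ((∀ v, (∀ w, ω v w = 0) → v = 0) → q = 0) := by
  
  classical
  -- ω is skew and ω(X, JX) = 0
  have hskew : ∀ X Y, ω X Y = -ω Y X := by
    intro X Y
    have h := hωalt (X + Y)
    simp only [map_add, LinearMap.add_apply, hωalt] at h
    linarith
  have hXJX : ∀ X, ω X (J X) = 0 := by
    intro X
    have h1 : ω (J X) X = ω X (J X) := hcompat X X
    have h2 : ω (J X) X = -ω X (J X) := hskew _ _
    linarith
  -- complex module structure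
  letI sC : SMul ℂ V := ⟨fun c v => c.re • v + c.im • J v⟩
  have hsmul : ∀ (c : ℂ) (v : V), c • v = c.re • v + c.im • J v := fun _ _ => rfl
  letI mC : Module ℂ V :=
    { one_smul := fun v => by
        rw [hsmul]; simp
      mul_smul := fun c d v => by
        rw [hsmul, hsmul, hsmul]
        simp only [Complex.mul_re, Complex.mul_im, map_add, map_smul, hJ, smul_neg,
          smul_add, smul_smul, sub_smul, add_smul]
        module
      smul_zero := fun c => by
        rw [hsmul]; simp
      smul_add := fun c v w => by
        rw [hsmul, hsmul, hsmul]
        simp only [map_add, smul_add]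
        module
      add_smul := fun c d v => by
        rw [hsmul, hsmul, hsmul]
        simp only [Complex.add_re, Complex.add_im, add_smul]
        module
      zero_smul := fun v => by
        rw [hsmul]; simp }
  letI : IsScalarTower ℝ ℂ V :=
    ⟨fun r c v => by
      rw [hsmul, hsmul]
      simp only [Complex.real_smul, Complex.mul_re, Complex.mul_im, Complex.ofReal_re,
        Complex.ofReal_im, zero_mul, sub_zero, zero_add, add_zero, smul_add, smul_smul]⟩
  haveI : FiniteDimensional ℂ V := Module.Finite.of_restrictScalars_finite ℝ ℂ V
  have hdim2 : Module.finrank ℝ V = 2 * Module.finrank ℂ V := by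
    rw [← Module.finrank_mul_finrank ℝ ℂ V, Complex.finrank_real_complex]
  -- the complex bilinear form
  set Ω : V →ₗ[ℂ] V →ₗ[ℂ] ℂ := LinearMap.mk₂ ℂ (fun X Y => ⟨ω X Y, -ω X (J Y)⟩)
    (by intro X X' Y; apply Complex.ext <;>
          simp [map_add, LinearMap.add_apply] <;> ring)
    (by intro c X Y
        apply Complex.ext <;>
          simp [hsmul, map_add, map_smul, LinearMap.add_apply, LinearMap.smul_apply,
            smul_eq_mul, Complex.mul_re, Complex.mul_im, ← hcompat, hJ] <;> ring)
    (by intro X Y Y'; apply Complex.ext <;>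
          simp [map_add, LinearMap.add_apply] <;> ring)
    (by intro c X Y
        apply Complex.ext <;>
          simp [hsmul, map_add, map_smul, LinearMap.add_apply, LinearMap.smul_apply,
            smul_eq_mul, Complex.mul_re, Complex.mul_im, hJ] <;> ring) with hΩdef
  have hre : ∀ X Y, (Ω X Y).re = ω X Y := fun X Y => rfl
  have him : ∀ X Y, (Ω X Y).im = -ω X (J Y) := fun X Y => rfl
  have halt' : ∀ v, Ω v v = 0 := by
    intro v
    apply Complex.ext
    · rw [hre, hωalt]; rfl
    · rw [him, hXJX]; simp
  obtain ⟨q, p, u, e, f, hspan, hcount, hrad, hef, hee, hff⟩ :=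
    symp_aux ℂ (Module.finrank ℂ V) V rfl Ω halt'
  -- basic pairings over ℝ
  have ωef : ∀ k l, ω (e k) (f l) = if k = l then 1 else 0 := by
    intro k l
    have := congrArg Complex.re (hef k l)
    rw [hre] at this
    rw [this]
    split_ifs <;> simp
  have ωeJf : ∀ k l, ω (e k) (J (f l)) = 0 := by
    intro k l
    have := congrArg Complex.im (hef k l)
    rw [him] at this
    have h2 : -ω (e k) (J (f l)) = 0 := by
      rw [this]; split_ifs <;> simp
    linarith
  have ωee : ∀ k l, ω (e k) (e l) = 0 := by
    intro k l
    have := congrArg Complex.re (hee k l)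
    rw [hre] at this
    simpa using this
  have ωeJe : ∀ k l, ω (e k) (J (e l)) = 0 := by
    intro k l
    have := congrArg Complex.im (hee k l)
    rw [him] at this
    simp only [Complex.zero_im, neg_eq_zero] at this
    exact this
  have ωff : ∀ k l, ω (f k) (f l) = 0 := by
    intro k l
    have := congrArg Complex.re (hff k l)
    rw [hre] at this
    simpa using this
  have ωfJf : ∀ k l, ω (f k) (J (f l)) = 0 := by
    intro k l
    have := congrArg Complex.im (hff k l)
    rw [him] at this
    simp only [Complex.zero_im, neg_eq_zero] at this
    exact this
  have ωrad : ∀ h v, ω (u h) v = 0 := by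
    intro h v
    have := congrArg Complex.re (hrad h v)
    rw [hre] at this
    simpa using this
  -- spanning over ℝ
  set big := Sum.elim u (Sum.elim (J ∘ u) (Sum.elim e (Sum.elim f (Sum.elim (J ∘ e) (J ∘ f)))))
    with hbigdef
  set T := Set.range big with hTdef
  have hJmem : ∀ v ∈ Submodule.span ℝ T, J v ∈ Submodule.span ℝ T := by
    have hmap : Submodule.map J (Submodule.span ℝ T) ≤ Submodule.span ℝ T := by
      rw [Submodule.map_span]
      apply Submodule.span_le.mpr
      rintro _ ⟨_, ⟨i, rfl⟩, rfl⟩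
      rcases i with i | i | i | i | i | i
      · exact Submodule.subset_span ⟨Sum.inr (Sum.inl i), rfl⟩
      · have : J (big (Sum.inr (Sum.inl i))) = -(big (Sum.inl i)) := hJ (u i)
        rw [this]
        exact neg_mem (Submodule.subset_span ⟨Sum.inl i, rfl⟩)
      · exact Submodule.subset_span ⟨Sum.inr (Sum.inr (Sum.inr (Sum.inr (Sum.inl i)))), rfl⟩
      · exact Submodule.subset_span ⟨Sum.inr (Sum.inr (Sum.inr (Sum.inr (Sum.inr i)))), rfl⟩
      · have : J (big (Sum.inr (Sum.inr (Sum.inr (Sum.inr (Sum.inl i)))))) =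
            -(big (Sum.inr (Sum.inr (Sum.inl i)))) := hJ (e i)
        rw [this]
        exact neg_mem (Submodule.subset_span ⟨Sum.inr (Sum.inr (Sum.inl i)), rfl⟩)
      · have : J (big (Sum.inr (Sum.inr (Sum.inr (Sum.inr (Sum.inr i)))))) =
            -(big (Sum.inr (Sum.inr (Sum.inr (Sum.inl i))))) := hJ (f i)
        rw [this]
        exact neg_mem (Submodule.subset_span ⟨Sum.inr (Sum.inr (Sum.inr (Sum.inl i))), rfl⟩)
    exact fun v hv => hmap ⟨v, hv, rfl⟩
  have hspanR : Submodule.span ℝ T = ⊤ := by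
    rw [eq_top_iff]
    intro v _
    have hv : v ∈ Submodule.span ℂ (Set.range (Sum.elim u (Sum.elim e f))) := by
      rw [hspan]; trivial
    refine Submodule.span_induction ?_ ?_ ?_ ?_ hv
    · rintro _ ⟨i, rfl⟩
      rcases i with i | i | i
      · exact Submodule.subset_span ⟨Sum.inl i, rfl⟩
      · exact Submodule.subset_span ⟨Sum.inr (Sum.inr (Sum.inl i)), rfl⟩
      · exact Submodule.subset_span ⟨Sum.inr (Sum.inr (Sum.inr (Sum.inl i))), rfl⟩
    · exact Submodule.zero_mem _
    · intro a b _ _ ha hb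
      exact Submodule.add_mem _ ha hb
    · intro c a _ ha
      rw [hsmul]
      exact Submodule.add_mem _ (Submodule.smul_mem _ _ ha)
        (Submodule.smul_mem _ _ (hJmem a ha))
  have hcard : Fintype.card (Fin q ⊕ (Fin q ⊕ (Fin p ⊕ (Fin p ⊕ (Fin p ⊕ Fin p))))) =
      Module.finrank ℝ V := by
    simp only [Fintype.card_sum, Fintype.card_fin]
    omega
  have hli : LinearIndependent ℝ big :=
    linearIndependent_of_top_le_span_of_card_eq_finrank (hspanR ▸ le_rfl) hcard
  refine ⟨q, p, u, e, f, ⟨hli, hspanR⟩, ?_, ωef, ?_, ωee, ωff, ωeJf, ?_, ωeJe, ωfJf, ?_, ?_, ?_, ?_⟩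
  · intro h v
    refine ⟨ωrad h v, ?_⟩
    rw [hcompat]
    exact ωrad h (J v)
  · -- ω(Je, Jf) = -δ
    intro k l
    rw [hcompat, hJ, map_neg, ωef]
    split_ifs <;> simp
  · -- ω(Je, f) = 0
    intro k l
    rw [hcompat]
    exact ωeJf k l
  · -- ω(Je, Je) = 0
    intro k l
    rw [hcompat, hJ, map_neg, ωee]
    simp
  · -- ω(Jf, Jf) = 0
    intro k l
    rw [hcompat, hJ, map_neg, ωff]
    simp
  · omega
  · intro hnd
    by_contra hq
    have i : Fin q := ⟨0, Nat.pos_of_ne_zero hq⟩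
    have hu0 : u i = 0 := hnd _ (fun w => ωrad i w)
    exact hli.ne_zero (Sum.inl i) hu0
end

section
/- Let (M,φ_i,ξ,η,g) be an Sp(n)-almost contact metric manifold. Then for every even permutation (i,j,k) of (1,2,3) and all vector fields X,Y,Z: g(N_{φ_i}(X,Y),φ_jZ) = dΦ_j(X,Y,Z) - dΦ_j(φ_iX,φ_iY,Z) - dΦ_k(φ_iX,Y,Z) - dΦ_k(X,φ_iY,Z), where N_{φ_i} = [φ_i,φ_i] + dη⊗ξ and Φ_i(X,Y) = g(X,φ_iY). -/
/-!
We work in a Koszul-style algebraic framework for the calculus of vector fields on a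
smooth manifold: `F` plays the role of the commutative ℝ-algebra of smooth functions
on the manifold `M`, and `V` plays the role of the `F`-module of smooth vector fields.
`act` is the action of vector fields on functions (as ℝ-derivations) and `lie` is the
Lie bracket of vector fields.  All the classical tensors (differentials of forms via the
global Koszul formulas, the Nijenhuis torsion, Lie derivatives, Levi-Civita connection,
curvature, ...) are expressed through their standard global formulas in this framework.
-/

structure VFCalc (F : Type) (V : Type) [CommRing F] [Algebra ℝ F]
    [AddCommGroup V] [Module F V] where
  /-- action of a vector field on a function, `X f` -/
  act : V → F → F
  /-- Lie bracket of vector fields -/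
  lie : V → V → V
  act_addV : ∀ X Y f, act (X + Y) f = act X f + act Y f
  act_smulV : ∀ (h : F) (X : V) (f : F), act (h • X) f = h * act X f
  act_add : ∀ X f g, act X (f + g) = act X f + act X g
  act_mul : ∀ X f g, act X (f * g) = act X f * g + f * act X g
  act_algebraMap : ∀ X (r : ℝ), act X (algebraMap ℝ F r) = 0
  lie_add_left : ∀ X Y Z, lie (X + Y) Z = lie X Z + lie Y Z
  lie_skew : ∀ X Y, lie X Y = -lie Y X
  lie_smul_right : ∀ (f : F) (X Y : V), lie X (f • Y) = act X f • Y + f • lie X Y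
  lie_jacobi : ∀ X Y Z, lie X (lie Y Z) + lie Y (lie Z X) + lie Z (lie X Y) = 0
  act_lie : ∀ X Y f, act (lie X Y) f = act X (act Y f) - act Y (act X f)

namespace VFCalc

variable {F V : Type} [CommRing F] [Algebra ℝ F] [AddCommGroup V] [Module F V]
variable (C : VFCalc F V)

/-- Exterior differential of a 1-form, `dη(X,Y) = X(η(Y)) - Y(η(X)) - η([X,Y])`. -/
def d1 (η : V → F) (X Y : V) : F := C.act X (η Y) - C.act Y (η X) - η (C.lie X Y)

/-- Exterior differential of a 2-form (Koszul global formula). -/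
def d2 (ω : V → V → F) (X Y Z : V) : F :=
  C.act X (ω Y Z) - C.act Y (ω X Z) + C.act Z (ω X Y)
    - ω (C.lie X Y) Z + ω (C.lie X Z) Y - ω (C.lie Y Z) X

/-- The tensor `N_φ = [φ,φ] + dη ⊗ ξ` of an almost contact structure. -/
def nij (φ : V → V) (ξ : V) (η : V → F) (X Y : V) : V :=
  C.lie (φ X) (φ Y) + φ (φ (C.lie X Y)) - φ (C.lie X (φ Y)) - φ (C.lie (φ X) Y)
    + C.d1 η X Y • ξ

/-- `ξ` is a Killing vector field for `g`, i.e. `L_ξ g = 0`. -/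
def IsKilling (g : V → V → F) (ξ : V) : Prop :=
  ∀ X Y, C.act ξ (g X Y) - g (C.lie ξ X) Y - g X (C.lie ξ Y) = 0

/-- Riemann curvature tensor `R(X,Y)Z = ∇_X ∇_Y Z - ∇_Y ∇_X Z - ∇_{[X,Y]} Z`. -/
def curv (D : V → V → V) (X Y Z : V) : V :=
  D X (D Y Z) - D Y (D X Z) - D (C.lie X Y) Z

end VFCalc

/-- An almost contact structure `(φ, ξ, η)` (without metric): `φ² = -I + η ⊗ ξ`, `η(ξ)=1`. -/
structure IsACS {F V : Type} [CommRing F] [AddCommGroup V] [Module F V]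
    (φ : V → V) (ξ : V) (η : V → F) : Prop where
  φ_add : ∀ X Y, φ (X + Y) = φ X + φ Y
  φ_smul : ∀ (f : F) (X : V), φ (f • X) = f • φ X
  η_add : ∀ X Y, η (X + Y) = η X + η Y
  η_smul : ∀ (f : F) (X : V), η (f • X) = f * η X
  φ_sq : ∀ X, φ (φ X) = -X + η X • ξ
  η_ξ : η ξ = 1

/-- An almost contact metric structure `(φ, ξ, η, g)`. -/
structure IsACMS {F V : Type} [CommRing F] [AddCommGroup V] [Module F V]
    (φ : V → V) (ξ : V) (η : V → F) (g : V → V → F) : Prop where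
  φ_add : ∀ X Y, φ (X + Y) = φ X + φ Y
  φ_smul : ∀ (f : F) (X : V), φ (f • X) = f • φ X
  η_add : ∀ X Y, η (X + Y) = η X + η Y
  η_smul : ∀ (f : F) (X : V), η (f • X) = f * η X
  g_add_left : ∀ X Y Z, g (X + Y) Z = g X Z + g Y Z
  g_smul_left : ∀ (f : F) (X Y : V), g (f • X) Y = f * g X Y
  g_symm : ∀ X Y, g X Y = g Y X
  φ_sq : ∀ X, φ (φ X) = -X + η X • ξ
  η_ξ : η ξ = 1
  g_compat : ∀ X Y, g (φ X) (φ Y) = g X Y - η X * η Y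

/-- The fundamental 2-form `Φ(X,Y) = g(X, φY)`. -/
def fund {F V : Type} [CommRing F] [AddCommGroup V] [Module F V]
    (g : V → V → F) (φ : V → V) (X Y : V) : F := g X (φ Y)

/-- The axioms of the Levi-Civita connection of `g` (which characterize it uniquely). -/
structure IsLeviCivita {F V : Type} [CommRing F] [Algebra ℝ F] [AddCommGroup V] [Module F V]
    (C : VFCalc F V) (g : V → V → F) (D : V → V → V) : Prop where
  add_left : ∀ X Y Z, D (X + Y) Z = D X Z + D Y Z
  smul_left : ∀ (f : F) (X Y : V), D (f • X) Y = f • D X Y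
  add_right : ∀ X Y Z, D X (Y + Z) = D X Y + D X Z
  leibniz : ∀ (f : F) (X Y : V), D X (f • Y) = C.act X f • Y + f • D X Y
  torsion_free : ∀ X Y, D X Y - D Y X = C.lie X Y
  metric : ∀ X Y Z, C.act X (g Y Z) = g (D X Y) Z + g Y (D X Z)

/-- Anti-normality: `N_φ = 2 dη ⊗ ξ`. -/
def AntiNormal {F V : Type} [CommRing F] [Algebra ℝ F] [AddCommGroup V] [Module F V]
    (C : VFCalc F V) (φ : V → V) (ξ : V) (η : V → F) : Prop :=
  ∀ X Y, C.nij φ ξ η X Y = (2 * C.d1 η X Y) • ξ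

/-- Anti-quasi-Sasakian: `dΦ = 0` and `N_φ = 2 dη ⊗ ξ`. -/
def IsAqS {F V : Type} [CommRing F] [Algebra ℝ F] [AddCommGroup V] [Module F V]
    (C : VFCalc F V) (φ : V → V) (ξ : V) (η : V → F) (g : V → V → F) : Prop :=
  (∀ X Y Z, C.d2 (fund g φ) X Y Z = 0) ∧ AntiNormal C φ ξ η
section AuxStatement10

variable {F V : Type} [CommRing F] [Algebra ℝ F] [AddCommGroup V] [Module F V]

lemma VFCalc.act_zero' (C : VFCalc F V) (X : V) : C.act X (0 : F) = 0 := by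
  have h := C.act_add X 0 0
  rw [add_zero] at h
  exact right_eq_add.mp h

lemma VFCalc.act_neg' (C : VFCalc F V) (X : V) (f : F) : C.act X (-f) = -C.act X f := by
  have h := C.act_add X f (-f)
  rw [add_neg_cancel, C.act_zero'] at h
  exact eq_neg_of_add_eq_zero_right h.symm

/-- The master computation, for a generic cyclic triple `(φi, φj, φk)`. -/
lemma key_lemma (C : VFCalc F V) (φi φj φk : V → V) (ξ : V) (η : V → F) (g : V → V → F)
    (gal : ∀ X Y Z : V, g (X + Y) Z = g X Z + g Y Z)
    (gar : ∀ X Y Z : V, g X (Y + Z) = g X Y + g X Z)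
    (gsl : ∀ (f : F) (X Y : V), g (f • X) Y = f * g X Y)
    (gsr : ∀ (f : F) (X Y : V), g X (f • Y) = f * g X Y)
    (gnl : ∀ X Y : V, g (-X) Y = -g X Y)
    (gnr : ∀ X Y : V, g X (-Y) = -g X Y)
    (hskew : ∀ X Y, g (φi X) Y = -g X (φi Y))
    (hij : ∀ X, φi (φj X) = φk X) (hji : ∀ X, φj (φi X) = -φk X)
    (hik : ∀ X, φi (φk X) = -φj X) (hki : ∀ X, φk (φi X) = φj X)
    (hineg : ∀ X : V, φi (-X) = -φi X)
    (hsq : ∀ X, φi (φi X) = -X + η X • ξ)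
    (hgξl : ∀ X, g ξ X = η X) (hgξr : ∀ X, g X ξ = η X)
    (hηi : ∀ X, η (φi X) = 0) (hηj : ∀ X, η (φj X) = 0) (hηk : ∀ X, η (φk X) = 0)
    (X Y Z : V) :
    g (C.nij φi ξ η X Y) (φj Z) =
      C.d2 (fund g φj) X Y Z - C.d2 (fund g φj) (φi X) (φi Y) Z
        - C.d2 (fund g φk) (φi X) Y Z - C.d2 (fund g φk) X (φi Y) Z := by
  simp only [VFCalc.nij, VFCalc.d1, VFCalc.d2, fund, sub_eq_add_neg,
    hij, hji, hik, hki, hineg, hsq,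
    gal, gar, gsl, gsr, gnl, gnr, hskew,
    hgξl, hgξr, hηi, hηj, hηk, C.act_neg', neg_neg,
    mul_zero, zero_mul, mul_one, one_mul, neg_zero, add_zero, zero_add]
  ring

section ACMSlemmas

variable {φ : V → V} {ξ : V} {η : V → F} {g : V → V → F}

lemma acms_phi_neg (h : IsACMS φ ξ η g) (X : V) : φ (-X) = -φ X := by
  have := h.φ_smul (-1 : F) X; simpa using this

lemma acms_phi_zero (h : IsACMS φ ξ η g) : φ (0 : V) = 0 := by
  have := h.φ_smul (0 : F) 0; simpa using this

lemma acms_eta_neg (h : IsACMS φ ξ η g) (X : V) : η (-X) = -η X := by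
  have := h.η_smul (-1 : F) X; simpa using this

lemma acms_eta_zero (h : IsACMS φ ξ η g) : η (0 : V) = 0 := by
  have := h.η_smul (0 : F) 0; simpa using this

lemma acms_g_zero_left (h : IsACMS φ ξ η g) (X : V) : g 0 X = 0 := by
  have := h.g_smul_left (0 : F) 0 X; simpa using this

lemma acms_g_zero_right (h : IsACMS φ ξ η g) (X : V) : g X 0 = 0 := by
  rw [h.g_symm]; exact acms_g_zero_left h X

lemma acms_g_neg_left (h : IsACMS φ ξ η g) (X Y : V) : g (-X) Y = -g X Y := by
  have := h.g_smul_left (-1 : F) X Y; simpa using this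

lemma acms_g_add_right (h : IsACMS φ ξ η g) (X Y Z : V) : g X (Y + Z) = g X Y + g X Z := by
  rw [h.g_symm, h.g_add_left, h.g_symm Y, h.g_symm Z]

lemma acms_g_smul_right (h : IsACMS φ ξ η g) (f : F) (X Y : V) : g X (f • Y) = f * g X Y := by
  rw [h.g_symm, h.g_smul_left, h.g_symm Y]

lemma acms_g_neg_right (h : IsACMS φ ξ η g) (X Y : V) : g X (-Y) = -g X Y := by
  rw [h.g_symm, acms_g_neg_left h, h.g_symm Y]

lemma acms_phisq_xi (h : IsACMS φ ξ η g) : φ (φ ξ) = 0 := by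
  rw [h.φ_sq, h.η_ξ, one_smul, neg_add_cancel]

lemma acms_phi_xi (h : IsACMS φ ξ η g) : φ ξ = η (φ ξ) • ξ := by
  have h2 := h.φ_sq (φ ξ)
  rw [acms_phisq_xi h, acms_phi_zero h] at h2
  exact neg_add_eq_zero.mp h2.symm

lemma acms_eta_phi (h : IsACMS φ ξ η g) (X : V) : η (φ X) = η (φ ξ) * η X := by
  have hA : φ (φ (φ X)) = -φ X + η X • φ ξ := by
    calc φ (φ (φ X)) = φ (-X + η X • ξ) := by rw [h.φ_sq X]
      _ = φ (-X) + φ (η X • ξ) := h.φ_add _ _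
      _ = -φ X + η X • φ ξ := by rw [acms_phi_neg h, h.φ_smul]
  have hB := h.φ_sq (φ X)
  have hC : η X • φ ξ = η (φ X) • ξ := add_left_cancel (hA.symm.trans hB)
  rw [acms_phi_xi h, smul_smul] at hC
  have hD := congrArg η hC
  rw [h.η_smul, h.η_smul, h.η_ξ, mul_one, mul_one] at hD
  rw [← hD]; ring

lemma acms_c_sq (h : IsACMS φ ξ η g) : η (φ ξ) * η (φ ξ) = 0 := by
  have h0 : η (φ (φ ξ)) = 0 := by rw [acms_phisq_xi h, acms_eta_zero h]
  rwa [acms_eta_phi h (φ ξ)] at h0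

end ACMSlemmas

end AuxStatement10

/-- Lemma `Lemma:CM-D`.
On an `Sp(n)`-almost contact metric manifold, for every even permutation `(i,j,k)` of
`(1,2,3)` (i.e. the three cyclic permutations) and all vector fields `X, Y, Z`:
`g(N_{φᵢ}(X,Y), φⱼZ) = dΦⱼ(X,Y,Z) - dΦⱼ(φᵢX, φᵢY, Z) - dΦₖ(φᵢX, Y, Z) - dΦₖ(X, φᵢY, Z)`. -/
theorem statement10
    {F V : Type} [CommRing F] [Algebra ℝ F] [AddCommGroup V] [Module F V]
    (C : VFCalc F V) (φ₁ φ₂ φ₃ : V → V) (ξ : V) (η : V → F) (g : V → V → F)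
    (h₁ : IsACMS φ₁ ξ η g) (h₂ : IsACMS φ₂ ξ η g) (h₃ : IsACMS φ₃ ξ η g)
    -- quaternionic identities
    (h12 : ∀ X, φ₁ (φ₂ X) = φ₃ X) (h21 : ∀ X, φ₂ (φ₁ X) = -φ₃ X)
    (h23 : ∀ X, φ₂ (φ₃ X) = φ₁ X) (h32 : ∀ X, φ₃ (φ₂ X) = -φ₁ X)
    (h31 : ∀ X, φ₃ (φ₁ X) = φ₂ X) (h13 : ∀ X, φ₁ (φ₃ X) = -φ₂ X) :
    -- (i,j,k) = (1,2,3)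
    (∀ X Y Z, g (C.nij φ₁ ξ η X Y) (φ₂ Z) =
      C.d2 (fund g φ₂) X Y Z - C.d2 (fund g φ₂) (φ₁ X) (φ₁ Y) Z
        - C.d2 (fund g φ₃) (φ₁ X) Y Z - C.d2 (fund g φ₃) X (φ₁ Y) Z) ∧
    -- (i,j,k) = (2,3,1)
    (∀ X Y Z, g (C.nij φ₂ ξ η X Y) (φ₃ Z) =
      C.d2 (fund g φ₃) X Y Z - C.d2 (fund g φ₃) (φ₂ X) (φ₂ Y) Z
        - C.d2 (fund g φ₁) (φ₂ X) Y Z - C.d2 (fund g φ₁) X (φ₂ Y) Z) ∧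
    -- (i,j,k) = (3,1,2)
    (∀ X Y Z, g (C.nij φ₃ ξ η X Y) (φ₁ Z) =
      C.d2 (fund g φ₁) X Y Z - C.d2 (fund g φ₁) (φ₃ X) (φ₃ Y) Z
        - C.d2 (fund g φ₂) (φ₃ X) Y Z - C.d2 (fund g φ₂) X (φ₃ Y) Z) := by
  have E₁ := acms_eta_phi h₁
  have E₂ := acms_eta_phi h₂
  have E₃ := acms_eta_phi h₃
  have rel1 : η (φ₂ ξ) * η (φ₁ ξ) = -η (φ₃ ξ) := by
    have e := congrArg η (h21 ξ)
    rwa [E₂ (φ₁ ξ), acms_eta_neg h₁] at e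
  have rel2 : η (φ₂ ξ) * η (φ₃ ξ) = η (φ₁ ξ) := by
    have e := congrArg η (h23 ξ)
    rwa [E₂ (φ₃ ξ)] at e
  have rel3 : η (φ₃ ξ) * η (φ₁ ξ) = η (φ₂ ξ) := by
    have e := congrArg η (h31 ξ)
    rwa [E₃ (φ₁ ξ)] at e
  have c2sq := acms_c_sq h₂
  have hc1 : η (φ₁ ξ) = 0 := by
    linear_combination (-1 : F) * rel2 + η (φ₂ ξ) * rel1 + (-η (φ₁ ξ)) * c2sq
  have hc2 : η (φ₂ ξ) = 0 := by rw [← rel3, hc1, mul_zero]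
  have hc3 : η (φ₃ ξ) = 0 := by
    have e := rel1; rw [hc1, mul_zero] at e
    exact neg_eq_zero.mp e.symm
  have hφ₁ξ : φ₁ ξ = 0 := by rw [acms_phi_xi h₁, hc1, zero_smul]
  have hηφ₁ : ∀ X, η (φ₁ X) = 0 := fun X => by rw [E₁ X, hc1, zero_mul]
  have hηφ₂ : ∀ X, η (φ₂ X) = 0 := fun X => by rw [E₂ X, hc2, zero_mul]
  have hηφ₃ : ∀ X, η (φ₃ X) = 0 := fun X => by rw [E₃ X, hc3, zero_mul]
  have hgξr : ∀ X, g X ξ = η X := by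
    intro X
    have hcom := h₁.g_compat X ξ
    rw [hφ₁ξ, acms_g_zero_right h₁, h₁.η_ξ, mul_one] at hcom
    exact sub_eq_zero.mp hcom.symm
  have hgξl : ∀ X, g ξ X = η X := fun X => by rw [h₁.g_symm]; exact hgξr X
  have skew : ∀ (φ : V → V), IsACMS φ ξ η g → (∀ X, η (φ X) = 0) →
      ∀ X Y, g (φ X) Y = -g X (φ Y) := by
    intro φ h hη X Y
    have hc := h.g_compat X (φ Y)
    rw [hη Y, mul_zero, sub_zero, h.φ_sq Y, acms_g_add_right h, acms_g_neg_right h,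
      acms_g_smul_right h, hgξr (φ X), hη X, mul_zero, add_zero] at hc
    exact neg_eq_iff_eq_neg.mp hc
  have skew₁ := skew φ₁ h₁ hηφ₁
  have skew₂ := skew φ₂ h₂ hηφ₂
  have skew₃ := skew φ₃ h₃ hηφ₃
  refine ⟨fun X Y Z => ?_, fun X Y Z => ?_, fun X Y Z => ?_⟩
  · exact key_lemma C φ₁ φ₂ φ₃ ξ η g h₁.g_add_left (acms_g_add_right h₁) h₁.g_smul_left
      (acms_g_smul_right h₁) (acms_g_neg_left h₁) (acms_g_neg_right h₁) skew₁
      h12 h21 h13 h31 (acms_phi_neg h₁) h₁.φ_sq hgξl hgξr hηφ₁ hηφ₂ hηφ₃ X Y Z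
  · exact key_lemma C φ₂ φ₃ φ₁ ξ η g h₁.g_add_left (acms_g_add_right h₁) h₁.g_smul_left
      (acms_g_smul_right h₁) (acms_g_neg_left h₁) (acms_g_neg_right h₁) skew₂
      h23 h32 h21 h12 (acms_phi_neg h₂) h₂.φ_sq hgξl hgξr hηφ₂ hηφ₃ hηφ₁ X Y Z
  · exact key_lemma C φ₃ φ₁ φ₂ ξ η g h₁.g_add_left (acms_g_add_right h₁) h₁.g_smul_left
      (acms_g_smul_right h₁) (acms_g_neg_left h₁) (acms_g_neg_right h₁) skew₃
      h31 h13 h32 h23 (acms_phi_neg h₃) h₃.φ_sq hgξl hgξr hηφ₃ hηφ₁ hηφ₂ X Y Z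
end
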